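/- Let K_x(y) := √2 · π · e^{−π(x²+y²)} ∫₀¹ t^{2π−1/2}(1−t²)^{−1/2} exp(2π(2xyt−(x²+y²)t²)/(1−t²)) dt. Then for all real x and y, the Fourier transform of K_x satisfies ∫_ℝ K_x(s) e^{−2πisy} ds = √2 · π · e^{−π(x²+y²)} ∫₀¹ t^{2π−1/2}(1+t²)^{−1/2} exp(2π(−2xyti + (x²+y²)t²)/(1+t²)) dt. -/

import Mathlib

open MeasureTheory Real
open scoped Real

/-- The reproducing kernel of the Fourier-symmetric Sobolev space `ℋ`:
`K_x(y) = √2 π e^{-π(x²+y²)} ∫₀¹ t^{2π-1/2}(1-t²)^{-1/2} exp(2π(2xyt-(x²+y²)t²)/(1-t²)) dt`. -/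
noncomputable def Kker (x y : ℝ) : ℝ :=
  Real.sqrt 2 * π * Real.exp (-π * (x ^ 2 + y ^ 2))
    * ∫ t in (0 : ℝ)..1, t ^ (2 * π - 1 / 2) * (1 - t ^ 2) ^ (-(1 : ℝ) / 2)
        * Real.exp (2 * π * (2 * x * y * t - (x ^ 2 + y ^ 2) * t ^ 2) / (1 - t ^ 2))

section FourierKernelAux

open Set

noncomputable def gK (t : ℝ) : ℝ := t ^ (2 * π - 1 / 2) * (1 - t ^ 2) ^ (-(1 : ℝ) / 2)
noncomputable def AK (t : ℝ) : ℝ := -π * (1 + t ^ 2) / (1 - t ^ 2)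
noncomputable def BK (x t : ℝ) : ℝ := 4 * π * x * t / (1 - t ^ 2)
noncomputable def DK (x t : ℝ) : ℝ := -π * x ^ 2 * (1 + t ^ 2) / (1 - t ^ 2)

noncomputable def FK (x y s t : ℝ) : ℂ :=
  (gK t : ℂ) * Complex.exp ((AK t : ℂ) * s ^ 2
    + ((BK x t : ℂ) + ((-2 * π * y : ℝ) : ℂ) * Complex.I) * s + (DK x t : ℂ))

lemma key1 (x y s : ℝ) {t : ℝ} (ht : t ∈ Ioo (0:ℝ) 1) :
    (Real.exp (-π * (x ^ 2 + s ^ 2)) : ℂ)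
        * ((t ^ (2 * π - 1 / 2) * (1 - t ^ 2) ^ (-(1 : ℝ) / 2)
            * Real.exp (2 * π * (2 * x * s * t - (x ^ 2 + s ^ 2) * t ^ 2) / (1 - t ^ 2)) : ℝ) : ℂ)
        * Complex.exp (-(2 * π * Complex.I * s * y))
      = FK x y s t := by
  have h1 : (1:ℝ) - t ^ 2 ≠ 0 := by nlinarith [ht.1, ht.2]
  have h1c : (1:ℂ) - (t:ℂ) ^ 2 ≠ 0 := by
    intro h
    apply h1
    have h2 : ((1 - t ^ 2 : ℝ) : ℂ) = 0 := by push_cast; exact h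
    exact_mod_cast h2
  unfold FK gK AK BK DK
  push_cast [Complex.ofReal_exp]
  have hE : (-(π:ℂ) * (1 + (t:ℂ) ^ 2) / (1 - (t:ℂ) ^ 2) * (s:ℂ) ^ 2 +
        (4 * (π:ℂ) * (x:ℂ) * (t:ℂ) / (1 - (t:ℂ) ^ 2) + -2 * (π:ℂ) * (y:ℂ) * Complex.I) * (s:ℂ) +
        -(π:ℂ) * (x:ℂ) ^ 2 * (1 + (t:ℂ) ^ 2) / (1 - (t:ℂ) ^ 2))
      = (-(π:ℂ) * ((x:ℂ) ^ 2 + (s:ℂ) ^ 2))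
        + (2 * (π:ℂ) * (2 * (x:ℂ) * (s:ℂ) * (t:ℂ) - ((x:ℂ) ^ 2 + (s:ℂ) ^ 2) * (t:ℂ) ^ 2) / (1 - (t:ℂ) ^ 2))
        + (-(2 * (π:ℂ) * Complex.I * (s:ℂ) * (y:ℂ))) := by
    field_simp
    ring
  rw [hE, Complex.exp_add, Complex.exp_add]
  ring

lemma lem1 (x y s : ℝ) :
    (Kker x s : ℂ) * Complex.exp (-(2 * π * Complex.I * s * y))
      = ((Real.sqrt 2 * π : ℝ) : ℂ) * ∫ t in Ioc (0:ℝ) 1, FK x y s t := by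
  have hIoo : (∫ t in Ioc (0:ℝ) 1, FK x y s t)
      = ∫ t in Ioo (0:ℝ) 1, ((Real.exp (-π * (x ^ 2 + s ^ 2)) : ℝ) : ℂ)
          * (((t ^ (2 * π - 1 / 2) * (1 - t ^ 2) ^ (-(1 : ℝ) / 2)
              * Real.exp (2 * π * (2 * x * s * t - (x ^ 2 + s ^ 2) * t ^ 2) / (1 - t ^ 2)) : ℝ)) : ℂ)
          * Complex.exp (-(2 * π * Complex.I * s * y)) := by
    rw [integral_Ioc_eq_integral_Ioo]
    exact setIntegral_congr_fun measurableSet_Ioo (fun t ht => (key1 x y s ht).symm)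
  rw [hIoo, Kker]
  rw [intervalIntegral.integral_of_le zero_le_one, integral_Ioc_eq_integral_Ioo]
  rw [integral_mul_const, integral_const_mul, integral_complex_ofReal]
  push_cast
  ring

lemma lem2 (x y : ℝ) {t : ℝ} (ht : t ∈ Ioo (0:ℝ) 1) :
    (∫ s : ℝ, FK x y s t)
      = ((Real.exp (-π * (x ^ 2 + y ^ 2)) : ℝ) : ℂ)
        * (((t ^ (2 * π - 1 / 2) : ℝ) : ℂ) * (((1 + t ^ 2) ^ (-(1 : ℝ) / 2) : ℝ) : ℂ)
            * Complex.exp (2 * π * (-(2 * x * y * t) * Complex.I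
                + ((x ^ 2 + y ^ 2) * t ^ 2 : ℝ)) / (1 + (t : ℂ) ^ 2))) := by
  have h1 : (0:ℝ) < 1 - t ^ 2 := by nlinarith [ht.1, ht.2]
  have h2 : (0:ℝ) < 1 + t ^ 2 := by positivity
  have hc1 : (1:ℂ) - (t:ℂ) ^ 2 ≠ 0 := by
    intro h
    have h2' : ((1 - t ^ 2 : ℝ) : ℂ) = 0 := by push_cast; exact h
    exact h1.ne' (by exact_mod_cast h2')
  have hc2 : (1:ℂ) + (t:ℂ) ^ 2 ≠ 0 := by
    intro h
    have h2' : ((1 + t ^ 2 : ℝ) : ℂ) = 0 := by push_cast; exact h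
    exact h2.ne' (by exact_mod_cast h2')
  have hAKneg : AK t < 0 := by
    have := Real.pi_pos
    unfold AK
    apply div_neg_of_neg_of_pos _ h1
    nlinarith
  have hb : ((AK t : ℂ)).re < 0 := by simpa using hAKneg
  have hpi : (π:ℂ) ≠ 0 := by exact_mod_cast Real.pi_ne_zero
  have hint : (∫ s : ℝ, FK x y s t)
      = (gK t : ℂ) * ∫ s : ℝ, Complex.exp ((AK t : ℂ) * (s:ℂ) ^ 2
          + ((BK x t : ℂ) + ((-2 * π * y : ℝ) : ℂ) * Complex.I) * (s:ℂ) + (DK x t : ℂ)) := by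
    simp only [FK]
    rw [integral_const_mul]
  rw [hint, integral_cexp_quadratic hb]
  -- step A: (π / -(AK t) : ℂ) ^ (1/2) = ofReal of rpow
  have hA : ((π:ℂ) / -((AK t : ℂ))) = (((1 - t ^ 2) / (1 + t ^ 2) : ℝ) : ℂ) := by
    unfold AK
    push_cast
    field_simp
  rw [hA, show (1/2 : ℂ) = ((1/2 : ℝ) : ℂ) by norm_num,
     ← Complex.ofReal_cpow (by positivity : (0:ℝ) ≤ (1 - t^2)/(1+t^2)) (1/2)]
  have hD : ((DK x t : ℂ) - ((BK x t : ℂ) + ((-2 * π * y : ℝ):ℂ) * Complex.I) ^ 2 / (4 * (AK t : ℂ)))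
      = ((-π * (x ^ 2 + y ^ 2) : ℝ) : ℂ)
        + 2 * (π:ℂ) * (-(2 * (x:ℂ) * (y:ℂ) * (t:ℂ)) * Complex.I + (((x ^ 2 + y ^ 2) * t ^ 2 : ℝ):ℂ)) / (1 + (t:ℂ) ^ 2) := by
    unfold AK BK DK
    have hI := Complex.I_sq
    push_cast
    field_simp [hpi, hc1, hc2]
    linear_combination (4 * (1 - (t:ℂ) ^ 2) ^ 2 * (y:ℂ) ^ 2) * hI
  rw [hD, Complex.exp_add, ← Complex.ofReal_exp]
  have hg : gK t * ((1 - t^2)/(1+t^2)) ^ ((1:ℝ)/2) = t ^ (2*π - 1/2) * (1 + t^2) ^ (-(1:ℝ)/2) := by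
    have hne : ((1:ℝ) - t^2) ^ ((1:ℝ)/2) ≠ 0 := by positivity
    unfold gK
    rw [Real.div_rpow h1.le h2.le,
      show (-(1:ℝ)/2) = -(1/2 : ℝ) by norm_num, Real.rpow_neg h1.le, Real.rpow_neg h2.le]
    field_simp
  have hg' : (gK t : ℂ) * ((((1 - t^2)/(1+t^2)) ^ ((1:ℝ)/2) : ℝ) : ℂ)
      = ((t ^ (2*π - 1/2) : ℝ) : ℂ) * (((1 + t^2) ^ (-(1:ℝ)/2) : ℝ) : ℂ) := by
    exact_mod_cast congrArg (fun r : ℝ => (r : ℂ)) hg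
  linear_combination (↑(rexp (-π * (x ^ 2 + y ^ 2))) *
    Complex.exp (2 * ↑π * (-(2 * (x:ℂ) * (y:ℂ) * (t:ℂ)) * Complex.I + (((x ^ 2 + y ^ 2) * t ^ 2 : ℝ):ℂ)) / (1 + (t:ℂ) ^ 2))) * hg'

lemma normFK (x y : ℝ) {t : ℝ} (ht : t ∈ Ioo (0:ℝ) 1) (s : ℝ) :
    ‖FK x y s t‖ = gK t * Real.exp (AK t * s ^ 2 + BK x t * s + DK x t) := by
  have h1 : (0:ℝ) ≤ 1 - t ^ 2 := by nlinarith [ht.2, ht.1]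
  have hg : 0 ≤ gK t :=
    mul_nonneg (Real.rpow_nonneg ht.1.le _) (Real.rpow_nonneg h1 _)
  rw [FK, norm_mul]
  rw [Complex.norm_real, Real.norm_eq_abs, _root_.abs_of_nonneg hg]
  rw [Complex.norm_exp]
  congr 2
  simp only [Complex.add_re, Complex.mul_re, Complex.ofReal_re, Complex.ofReal_im,
    ← Complex.ofReal_pow, Complex.I_re, Complex.I_im, Complex.add_im, Complex.mul_im]
  ring

lemma FK0 (x s t : ℝ) :
    FK x 0 s t = ((gK t * Real.exp (AK t * s ^ 2 + BK x t * s + DK x t) : ℝ) : ℂ) := by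
  unfold FK
  push_cast [Complex.ofReal_exp]
  norm_num

lemma intFK (x y : ℝ) {t : ℝ} (ht : t ∈ Ioo (0:ℝ) 1) :
    Integrable (fun s : ℝ => FK x y s t) := by
  have h1 : (0:ℝ) < 1 - t ^ 2 := by nlinarith [ht.1, ht.2]
  have hAKneg : AK t < 0 := by
    have := Real.pi_pos
    unfold AK
    apply div_neg_of_neg_of_pos _ h1
    nlinarith
  have hb : ((AK t : ℂ)).re < 0 := by simpa using hAKneg
  unfold FK
  exact (integrable_cexp_quadratic' hb _ _).const_mul _

lemma lemNorm (x y : ℝ) {t : ℝ} (ht : t ∈ Ioo (0:ℝ) 1) :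
    (∫ s : ℝ, ‖FK x y s t‖)
      = Real.exp (-π * (x ^ 2 + 0 ^ 2)) * (t ^ (2 * π - 1 / 2) * (1 + t ^ 2) ^ (-(1 : ℝ) / 2)
          * Real.exp (2 * π * ((x ^ 2 + 0 ^ 2) * t ^ 2) / (1 + t ^ 2))) := by
  have h := lem2 x 0 ht
  have hL : (∫ s : ℝ, FK x 0 s t)
      = (((∫ s : ℝ, gK t * Real.exp (AK t * s ^ 2 + BK x t * s + DK x t)) : ℝ) : ℂ) := by
    simp_rw [FK0 x _ t]
    exact integral_complex_ofReal
  have harg : (2 * (π:ℂ) * (-(2 * (x:ℂ) * ((0:ℝ):ℂ) * (t:ℂ)) * Complex.I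
        + (((x ^ 2 + (0:ℝ) ^ 2) * t ^ 2 : ℝ) : ℂ)) / (1 + (t:ℂ) ^ 2))
      = ((2 * π * ((x ^ 2 + 0 ^ 2) * t ^ 2) / (1 + t ^ 2) : ℝ) : ℂ) := by
    push_cast
    ring
  rw [hL, harg, ← Complex.ofReal_exp] at h
  have h' : (∫ s : ℝ, gK t * Real.exp (AK t * s ^ 2 + BK x t * s + DK x t))
      = Real.exp (-π * (x ^ 2 + 0 ^ 2)) * (t ^ (2 * π - 1 / 2) * (1 + t ^ 2) ^ (-(1:ℝ) / 2)
          * Real.exp (2 * π * ((x ^ 2 + 0 ^ 2) * t ^ 2) / (1 + t ^ 2))) := by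
    exact_mod_cast h
  rw [← h']
  simp only [normFK x y ht]

lemma measFK (x y : ℝ) :
    AEStronglyMeasurable (Function.uncurry fun s t : ℝ => FK x y s t)
      (volume.prod (volume.restrict (Ioo (0:ℝ) 1))) := by
  apply Measurable.aestronglyMeasurable
  unfold Function.uncurry FK gK AK BK DK
  fun_prop

lemma boundH (x : ℝ) {t : ℝ} (ht : t ∈ Ioo (0:ℝ) 1) :
    Real.exp (-π * (x ^ 2 + 0 ^ 2)) * (t ^ (2 * π - 1 / 2) * (1 + t ^ 2) ^ (-(1 : ℝ) / 2)
        * Real.exp (2 * π * ((x ^ 2 + 0 ^ 2) * t ^ 2) / (1 + t ^ 2))) ≤ 1 := by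
  have h2 : (0:ℝ) < 1 + t ^ 2 := by positivity
  have hpi := Real.pi_pos
  have hu : (0:ℝ) ≤ x ^ 2 + 0 ^ 2 := by positivity
  have h3 : Real.exp (-π * (x ^ 2 + 0 ^ 2)) * Real.exp (2 * π * ((x ^ 2 + 0 ^ 2) * t ^ 2) / (1 + t ^ 2)) ≤ 1 := by
    rw [← Real.exp_add, Real.exp_le_one_iff]
    have hdiv : 2 * π * ((x ^ 2 + 0 ^ 2) * t ^ 2) / (1 + t ^ 2) ≤ π * (x ^ 2 + 0 ^ 2) := by
      rw [div_le_iff₀ h2]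
      nlinarith [mul_nonneg (mul_nonneg hpi.le hu) (sq_nonneg t),
        mul_nonneg (mul_nonneg hpi.le hu) (by nlinarith [ht.2, ht.1] : (0:ℝ) ≤ 1 - t ^ 2)]
    linarith
  have ha : t ^ (2 * π - 1 / 2) ≤ 1 :=
    Real.rpow_le_one ht.1.le ht.2.le (by nlinarith [Real.pi_gt_three])
  have hb : (1 + t ^ 2) ^ (-(1 : ℝ) / 2) ≤ 1 :=
    Real.rpow_le_one_of_one_le_of_nonpos (by nlinarith) (by norm_num)
  have ha0 : (0:ℝ) ≤ t ^ (2 * π - 1 / 2) := Real.rpow_nonneg ht.1.le _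
  have hb0 : (0:ℝ) ≤ (1 + t ^ 2) ^ (-(1 : ℝ) / 2) := Real.rpow_nonneg h2.le _
  have e1 := Real.exp_nonneg (-π * (x ^ 2 + 0 ^ 2))
  have e3 := Real.exp_nonneg (2 * π * ((x ^ 2 + 0 ^ 2) * t ^ 2) / (1 + t ^ 2))
  nlinarith [mul_nonneg e1 e3, mul_nonneg ha0 hb0,
    mul_le_one₀ ha hb0 hb, mul_nonneg (mul_nonneg ha0 hb0) e3]

lemma intProd (x y : ℝ) :
    Integrable (Function.uncurry fun s t : ℝ => FK x y s t)
      (volume.prod (volume.restrict (Ioo (0:ℝ) 1))) := by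
  rw [integrable_prod_iff' (measFK x y)]
  constructor
  · filter_upwards [ae_restrict_mem measurableSet_Ioo] with t ht
    exact intFK x y ht
  · have hH : Integrable (fun t : ℝ => Real.exp (-π * (x ^ 2 + 0 ^ 2))
        * (t ^ (2 * π - 1 / 2) * (1 + t ^ 2) ^ (-(1 : ℝ) / 2)
          * Real.exp (2 * π * ((x ^ 2 + 0 ^ 2) * t ^ 2) / (1 + t ^ 2))))
        (volume.restrict (Ioo (0:ℝ) 1)) := by
      apply Integrable.mono' (integrable_const (1:ℝ))
      · apply Measurable.aestronglyMeasurable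
        fun_prop
      · filter_upwards [ae_restrict_mem measurableSet_Ioo] with t ht
        have h0 : (0:ℝ) ≤ t ^ (2 * π - 1 / 2) * (1 + t ^ 2) ^ (-(1 : ℝ) / 2)
            * Real.exp (2 * π * ((x ^ 2 + 0 ^ 2) * t ^ 2) / (1 + t ^ 2)) := by
          have h2 : (0:ℝ) < 1 + t ^ 2 := by positivity
          exact mul_nonneg (mul_nonneg (Real.rpow_nonneg ht.1.le _) (Real.rpow_nonneg h2.le _))
            (Real.exp_nonneg _)
        rw [Real.norm_eq_abs, _root_.abs_of_nonneg (mul_nonneg (Real.exp_nonneg _) h0)]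
        exact boundH x ht
    apply hH.congr
    filter_upwards [ae_restrict_mem measurableSet_Ioo] with t ht
    exact (lemNorm x y ht).symm

end FourierKernelAux

open Set in
/-- The Fourier transform of the reproducing kernel `K_x` of `ℋ`:
`K̂_x(y) = √2 π e^{-π(x²+y²)} ∫₀¹ t^{2π-1/2}(1+t²)^{-1/2} exp(2π(-2xyti+(x²+y²)t²)/(1+t²)) dt`. -/
theorem fourier_of_kernel (x y : ℝ) :
    ∫ s : ℝ, (Kker x s : ℂ) * Complex.exp (-(2 * π * Complex.I * s * y))
      = (Real.sqrt 2 * π * Real.exp (-π * (x ^ 2 + y ^ 2)) : ℝ)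
        * ∫ t in (0 : ℝ)..1,
            ((t ^ (2 * π - 1 / 2) : ℝ) : ℂ) * (((1 + t ^ 2) ^ (-(1 : ℝ) / 2) : ℝ) : ℂ)
              * Complex.exp (2 * π * (-(2 * x * y * t) * Complex.I
                  + ((x ^ 2 + y ^ 2) * t ^ 2 : ℝ)) / (1 + (t : ℂ) ^ 2)) := by
  have h1 : ∀ s : ℝ, (Kker x s : ℂ) * Complex.exp (-(2 * π * Complex.I * s * y))
      = ((Real.sqrt 2 * π : ℝ) : ℂ) * ∫ t in Ioo (0:ℝ) 1, FK x y s t := by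
    intro s
    rw [lem1, integral_Ioc_eq_integral_Ioo]
  calc ∫ s : ℝ, (Kker x s : ℂ) * Complex.exp (-(2 * π * Complex.I * s * y))
      = ∫ s : ℝ, ((Real.sqrt 2 * π : ℝ) : ℂ) * ∫ t in Ioo (0:ℝ) 1, FK x y s t := by
        simp only [h1]
    _ = ((Real.sqrt 2 * π : ℝ) : ℂ) * ∫ s : ℝ, ∫ t in Ioo (0:ℝ) 1, FK x y s t :=
        integral_const_mul _ _
    _ = ((Real.sqrt 2 * π : ℝ) : ℂ) * ∫ t in Ioo (0:ℝ) 1, ∫ s : ℝ, FK x y s t := by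
        rw [integral_integral_swap (intProd x y)]
    _ = ((Real.sqrt 2 * π : ℝ) : ℂ) * ∫ t in Ioo (0:ℝ) 1,
          ((Real.exp (-π * (x ^ 2 + y ^ 2)) : ℝ) : ℂ)
          * (((t ^ (2 * π - 1 / 2) : ℝ) : ℂ) * (((1 + t ^ 2) ^ (-(1 : ℝ) / 2) : ℝ) : ℂ)
            * Complex.exp (2 * π * (-(2 * x * y * t) * Complex.I
                + ((x ^ 2 + y ^ 2) * t ^ 2 : ℝ)) / (1 + (t : ℂ) ^ 2))) := by
        congr 1
        exact setIntegral_congr_fun measurableSet_Ioo fun t ht => lem2 x y ht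
    _ = (Real.sqrt 2 * π * Real.exp (-π * (x ^ 2 + y ^ 2)) : ℝ)
        * ∫ t in (0 : ℝ)..1,
            ((t ^ (2 * π - 1 / 2) : ℝ) : ℂ) * (((1 + t ^ 2) ^ (-(1 : ℝ) / 2) : ℝ) : ℂ)
              * Complex.exp (2 * π * (-(2 * x * y * t) * Complex.I
                  + ((x ^ 2 + y ^ 2) * t ^ 2 : ℝ)) / (1 + (t : ℂ) ^ 2)) := by
        rw [integral_const_mul, intervalIntegral.integral_of_le (zero_le_one' ℝ),
          integral_Ioc_eq_integral_Ioo]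
        push_cast
        ring
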